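/- For every positive integer n and every π ∈ S_n, the down degree satisfies d_−(π) ≤ ⌊n²/4⌋. -/

import Mathlib

open Equiv Finset

/-- Number of inversions (Coxeter length) of a permutation of `Fin n`. -/
def invNum {n : ℕ} (π : Equiv.Perm (Fin n)) : ℕ :=
  (Finset.univ.filter (fun p : Fin n × Fin n => p.1 < p.2 ∧ π p.2 < π p.1)).card

/-- Down degree: number of transpositions `t_{a,b}` with `ℓ(t_{a,b} π) = ℓ(π) - 1`. -/
def downDeg {n : ℕ} (π : Equiv.Perm (Fin n)) : ℕ :=
  (Finset.univ.filter (fun p : Fin n × Fin n =>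
    p.1 < p.2 ∧ invNum (Equiv.swap p.1 p.2 * π) + 1 = invNum π)).card

/-- Total degree: number of transpositions `t_{a,b}` with `ℓ(t_{a,b} π) = ℓ(π) ± 1`. -/
def totalDeg {n : ℕ} (π : Equiv.Perm (Fin n)) : ℕ :=
  (Finset.univ.filter (fun p : Fin n × Fin n =>
    p.1 < p.2 ∧ (invNum (Equiv.swap p.1 p.2 * π) + 1 = invNum π ∨
      invNum (Equiv.swap p.1 p.2 * π) = invNum π + 1))).card


section Aux

variable {n : ℕ}

lemma adj_swap_lt {p q i j : Fin n} (h : (p:ℕ)+1 = (q:ℕ)) (hij : i < j)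
    (hne : ¬(i = p ∧ j = q)) : Equiv.swap p q i < Equiv.swap p q j := by
  simp only [Fin.ext_iff, not_and] at hne
  rw [Fin.lt_def] at *
  rw [Equiv.swap_apply_def, Equiv.swap_apply_def]
  split_ifs <;> simp_all [Fin.ext_iff] <;> omega

lemma adj_mul_swap_eq {σ : Equiv.Perm (Fin n)} {p q : Fin n} (h : (p:ℕ)+1 = (q:ℕ))
    (hlt : σ p < σ q) : invNum (σ * Equiv.swap p q) = invNum σ + 1 := by
  set s := Equiv.swap p q with hs
  have hpq : p ≠ q := by simp [Fin.ext_iff]; omega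
  have hmem : (p, q) ∈ Finset.univ.filter
      (fun r : Fin n × Fin n => r.1 < r.2 ∧ (σ * s) r.2 < (σ * s) r.1) := by
    simp only [mem_filter, mem_univ, true_and, Perm.mul_apply, hs,
      Equiv.swap_apply_left, Equiv.swap_apply_right]
    exact ⟨by rw [Fin.lt_def]; omega, hlt⟩
  have hcard : invNum σ = ((Finset.univ.filter
      (fun r : Fin n × Fin n => r.1 < r.2 ∧ (σ * s) r.2 < (σ * s) r.1)).erase (p, q)).card := by
    apply Finset.card_bij (fun r _ => (s r.1, s r.2))
    · rintro ⟨a, b⟩ hr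
      simp only [mem_filter, mem_univ, true_and] at hr
      have hne : ¬(a = p ∧ b = q) := by
        rintro ⟨rfl, rfl⟩; exact absurd hr.2 (not_lt.2 hlt.le)
      have hab : s a < s b := adj_swap_lt h hr.1 hne
      refine Finset.mem_erase.2 ⟨?_, ?_⟩
      · intro hEq
        have h1 : s a = p := congrArg Prod.fst hEq
        have h2 : s b = q := congrArg Prod.snd hEq
        rw [← Equiv.swap_apply_right p q] at h1
        rw [← Equiv.swap_apply_left p q] at h2
        have := (Equiv.injective s h1) ▸ (Equiv.injective s h2) ▸ hr.1
        rw [Equiv.injective s h1, Equiv.injective s h2] at hr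
        exact absurd hr.1 (not_lt.2 (Fin.lt_def.2 (by omega)).le)
      · simp only [mem_filter, mem_univ, true_and, Perm.mul_apply]
        exact Finset.mem_filter.2 ⟨Finset.mem_univ _, hab, by
          simp only [hs, Perm.mul_apply, Equiv.swap_apply_self]; exact hr.2⟩
    · rintro ⟨a, b⟩ ha ⟨c, d⟩ hc hEq
      have h1 : s a = s c := congrArg Prod.fst hEq
      have h2 : s b = s d := congrArg Prod.snd hEq
      exact Prod.ext (Equiv.injective s h1) (Equiv.injective s h2)
    · rintro ⟨a, b⟩ ht
      rw [Finset.mem_erase, mem_filter] at ht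
      obtain ⟨hne, -, hab, hinv⟩ := ht
      have hne' : ¬(a = p ∧ b = q) := by rintro ⟨rfl, rfl⟩; exact hne rfl
      have hsab : s a < s b := adj_swap_lt h hab hne'
      refine ⟨(s a, s b), ?_, ?_⟩
      · simp only [mem_filter, mem_univ, true_and]
        refine ⟨hsab, ?_⟩
        simpa only [Perm.mul_apply, hs, Equiv.swap_apply_self] using hinv
      · simp [hs, Equiv.swap_apply_self]
  have : ((Finset.univ.filter
      (fun r : Fin n × Fin n => r.1 < r.2 ∧ (σ * s) r.2 < (σ * s) r.1)).erase (p, q)).card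
      = invNum (σ * s) - 1 := by
    rw [Finset.card_erase_of_mem hmem]; rfl
  have hpos : 0 < invNum (σ * s) := Finset.card_pos.2 ⟨_, hmem⟩
  unfold invNum at *
  omega

lemma adj_mul_swap_eq' {σ : Equiv.Perm (Fin n)} {p q : Fin n} (h : (p:ℕ)+1 = (q:ℕ))
    (hgt : σ q < σ p) : invNum σ = invNum (σ * Equiv.swap p q) + 1 := by
  have h2 : (σ * Equiv.swap p q) p < (σ * Equiv.swap p q) q := by
    simpa [Perm.mul_apply] using hgt
  have := adj_mul_swap_eq h h2
  rwa [mul_assoc, Equiv.swap_mul_self, mul_one] at this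

lemma adj_mul_swap_le {σ : Equiv.Perm (Fin n)} {p q : Fin n} (h : (p:ℕ)+1 = (q:ℕ)) :
    invNum (σ * Equiv.swap p q) ≤ invNum σ + 1 := by
  have hpq : p ≠ q := by simp [Fin.ext_iff]; omega
  rcases lt_or_gt_of_ne (fun hEq => hpq (σ.injective hEq) : σ p ≠ σ q) with hc | hc
  · exact (adj_mul_swap_eq h hc).le
  · have := adj_mul_swap_eq' h hc; omega

lemma mul_swap_lt : ∀ (d : ℕ) (σ : Equiv.Perm (Fin n)) (p q : Fin n),
    (q:ℕ) - p ≤ d → p < q → σ q < σ p → invNum (σ * Equiv.swap p q) < invNum σ := by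
  intro d
  induction d with
  | zero => intro σ p q hd hpq _; rw [Fin.lt_def] at hpq; omega
  | succ d ih =>
    intro σ p q hd hpq hval
    rw [Fin.lt_def] at hpq
    rcases eq_or_lt_of_le (Nat.succ_le_of_lt hpq) with hadj | hlt
    · have := adj_mul_swap_eq' hadj hval; omega
    · -- p+1 < q
      have hkn : (q:ℕ) - 1 < n := lt_trans (by omega) q.isLt
      set k : Fin n := ⟨(q:ℕ) - 1, hkn⟩ with hk
      have hkq : (k:ℕ) + 1 = (q:ℕ) := by simp [hk]; omega
      have hpk : p < k := by rw [Fin.lt_def]; simp [hk]; omega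
      have hkqne : k ≠ q := by simp [Fin.ext_iff, hk]; omega
      have hpkne : p ≠ k := Fin.ne_of_lt hpk
      have hpqne : p ≠ q := Fin.ne_of_lt (Fin.lt_def.2 hpq)
      set s := Equiv.swap k q with hs
      set σ' := σ * s with hσ'
      have hsp : s p = p := Equiv.swap_apply_of_ne_of_ne hpkne hpqne
      have hσ'p : σ' p = σ p := by simp [hσ', Perm.mul_apply, hsp]
      have hσ'k : σ' k = σ q := by simp [hσ', hs, Perm.mul_apply]
      have hσ'q : σ' q = σ k := by simp [hσ', hs, Perm.mul_apply]
      have hconj : s * Equiv.swap p k * s = Equiv.swap p q := by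
        have := Equiv.swap_mul_swap_mul_swap (x := p) (y := k) (z := q) hpkne hpqne
        rw [this, Equiv.swap_comm]
      have hfinal : σ * Equiv.swap p q = (σ' * Equiv.swap p k) * s := by
        rw [hσ', ← hconj]; group
      have hkne : σ k ≠ σ q := fun hEq => hkqne (σ.injective hEq)
      rcases lt_or_gt_of_ne hkne with hB | hB
      · -- σ k < σ q, so σ' = σ * s increases by 1
        have h1 : invNum σ' = invNum σ + 1 := adj_mul_swap_eq hkq hB
        have h2 : invNum (σ' * Equiv.swap p k) < invNum σ' := by
          apply ih σ' p k (by simp [hk]; omega) hpk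
          rw [hσ'k, hσ'p]; exact hval
        have h3 : (σ' * Equiv.swap p k) q < (σ' * Equiv.swap p k) k := by
          have e1 : (σ' * Equiv.swap p k) q = σ k := by
            rw [Perm.mul_apply, Equiv.swap_apply_of_ne_of_ne hpqne.symm hkqne.symm, hσ'q]
          have e2 : (σ' * Equiv.swap p k) k = σ p := by
            rw [Perm.mul_apply, Equiv.swap_apply_right, hσ'p]
          rw [e1, e2]; exact lt_trans hB hval
        have h4 := adj_mul_swap_eq' hkq h3
        rw [← hs] at h4
        rw [hfinal]; omega
      · -- σ q < σ k : σ' = σ * s decreases by 1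
        have h1 : invNum σ = invNum σ' + 1 := adj_mul_swap_eq' hkq hB
        have h2 : invNum (σ' * Equiv.swap p k) < invNum σ' := by
          apply ih σ' p k (by simp [hk]; omega) hpk
          rw [hσ'k, hσ'p]; exact hval
        have h4 : invNum ((σ' * Equiv.swap p k) * s) ≤ invNum (σ' * Equiv.swap p k) + 1 :=
          adj_mul_swap_le hkq
        rw [hfinal]; omega

lemma descent_lt {σ : Equiv.Perm (Fin n)} {x y : Fin n} (hxy : x < y)
    (h : σ⁻¹ y < σ⁻¹ x) : invNum (Equiv.swap x y * σ) < invNum σ := by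
  have hrw : Equiv.swap x y * σ = σ * Equiv.swap (σ⁻¹ y) (σ⁻¹ x) := by
    rw [Equiv.mul_swap_eq_swap_mul]
    simp [Equiv.swap_comm]
  rw [hrw]
  apply mul_swap_lt ((σ⁻¹ x : ℕ) - σ⁻¹ y) σ _ _ le_rfl h
  simp only [← Equiv.Perm.mul_apply, mul_inv_cancel, Equiv.Perm.one_apply]
  exact hxy

lemma lt_of_descent {σ : Equiv.Perm (Fin n)} {x y : Fin n} (hxy : x < y)
    (h : invNum (Equiv.swap x y * σ) < invNum σ) : σ⁻¹ y < σ⁻¹ x := by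
  by_contra hc
  have hne : σ⁻¹ x ≠ σ⁻¹ y := fun hEq => (Fin.ne_of_lt hxy)
    (by simpa using congrArg σ hEq)
  have hlt : σ⁻¹ x < σ⁻¹ y := lt_of_le_of_ne (not_lt.1 hc) hne
  set ρ := Equiv.swap x y * σ with hρ
  have h1 : ρ⁻¹ y < ρ⁻¹ x := by
    have e1 : ρ⁻¹ y = σ⁻¹ x := by
      simp [hρ, mul_inv_rev, Perm.mul_apply]
    have e2 : ρ⁻¹ x = σ⁻¹ y := by
      simp [hρ, mul_inv_rev, Perm.mul_apply]
    rw [e1, e2]; exact hlt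
  have := descent_lt hxy h1
  rw [hρ, ← mul_assoc, Equiv.swap_mul_self, one_mul] at this
  rw [← hρ] at this
  omega

lemma no_triangle (π : Equiv.Perm (Fin n)) {a b c : Fin n} (hab : a < b) (hbc : b < c)
    (h1 : invNum (Equiv.swap a b * π) + 1 = invNum π)
    (h2 : invNum (Equiv.swap b c * π) + 1 = invNum π)
    (h3 : invNum (Equiv.swap a c * π) + 1 = invNum π) : False := by
  have hac : a < c := lt_trans hab hbc
  have hinvB : π⁻¹ b < π⁻¹ a := lt_of_descent hab (by omega)
  have hinvC : π⁻¹ c < π⁻¹ b := lt_of_descent hbc (by omega)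
  set μ := Equiv.swap b c * π with hμdef
  have hμ : invNum μ + 1 = invNum π := h2
  have eμb : μ⁻¹ b = π⁻¹ c := by
    simp [hμdef, mul_inv_rev, Perm.mul_apply]
  have eμa : μ⁻¹ a = π⁻¹ a := by
    simp [hμdef, mul_inv_rev, Perm.mul_apply,
      Equiv.swap_apply_of_ne_of_ne (Fin.ne_of_lt hab) (Fin.ne_of_lt hac)]
  have hd1 : invNum (Equiv.swap a b * μ) < invNum μ := by
    apply descent_lt hab
    rw [eμb, eμa]; exact lt_trans hinvC hinvB
  set ν := Equiv.swap a b * μ with hνdef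
  have eνc : ν⁻¹ c = π⁻¹ b := by
    simp [hνdef, hμdef, mul_inv_rev, Perm.mul_apply,
      Equiv.swap_apply_of_ne_of_ne (Fin.ne_of_lt hac).symm (Fin.ne_of_lt hbc).symm]
  have eνb : ν⁻¹ b = π⁻¹ a := by
    simp [hνdef, hμdef, mul_inv_rev, Perm.mul_apply,
      Equiv.swap_apply_of_ne_of_ne (Fin.ne_of_lt hab) (Fin.ne_of_lt hac)]
  have hd2 : invNum (Equiv.swap b c * ν) < invNum ν := by
    apply descent_lt hbc
    rw [eνc, eνb]; exact hinvB
  have heq : Equiv.swap b c * ν = Equiv.swap a c * π := by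
    rw [hνdef, hμdef, ← mul_assoc, ← mul_assoc]
    congr 1
    rw [Equiv.swap_mul_swap_mul_swap (Fin.ne_of_lt hab) (Fin.ne_of_lt hac), Equiv.swap_comm]
  rw [heq] at hd2
  omega

lemma mantel_ordered (r : Fin n → Fin n → Prop) [DecidableRel r]
    (hsym : ∀ a b, r a b → r b a)
    (htri : ∀ a b c, r a b → r b c → r a c → False) :
    2 * (Finset.univ.filter (fun p : Fin n × Fin n => r p.1 p.2)).card ≤ n ^ 2 := by
  classical
  set D : Fin n → ℕ := fun v => (Finset.univ.filter (fun u => r v u)).card with hD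
  set S := Finset.univ.filter (fun p : Fin n × Fin n => r p.1 p.2) with hS
  have hfiber : ∀ v : Fin n, (S.filter (fun p => p.1 = v)).card = D v := by
    intro v
    apply Finset.card_bij (fun p _ => p.2)
    · rintro ⟨a, b⟩ hp
      simp only [hS, Finset.mem_filter, Finset.mem_univ, true_and] at hp ⊢
      obtain ⟨h1, rfl⟩ := hp
      exact h1
    · rintro ⟨a, b⟩ ha ⟨c, d⟩ hc hEq
      simp only [hS, Finset.mem_filter] at ha hc
      simp only at hEq
      exact Prod.ext (ha.2.trans hc.2.symm) hEq
    · intro u hu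
      simp only [hD, Finset.mem_filter, Finset.mem_univ, true_and] at hu
      exact ⟨(v, u), by simp [hS, hu], rfl⟩
  have hm : S.card = ∑ v : Fin n, D v := by
    rw [Finset.card_eq_sum_card_fiberwise (f := Prod.fst) (t := Finset.univ)
      (fun p _ => Finset.mem_univ _)]
    exact Finset.sum_congr rfl fun v _ => hfiber v
  have hsum1 : ∑ p ∈ S, D p.1 = ∑ v : Fin n, D v * D v := by
    rw [← Finset.sum_fiberwise_of_maps_to (g := Prod.fst) (t := Finset.univ)
      (fun p _ => Finset.mem_univ _) (fun p : Fin n × Fin n => D p.1)]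
    refine Finset.sum_congr rfl fun v _ => ?_
    have hcg : ∀ p ∈ S.filter (fun p => p.1 = v), D p.1 = D v := fun p hp => by
      rw [(Finset.mem_filter.1 hp).2]
    rw [Finset.sum_congr rfl hcg, Finset.sum_const, hfiber v, smul_eq_mul]
  have hswapS : ∀ p : Fin n × Fin n, p ∈ S → (p.2, p.1) ∈ S := by
    rintro ⟨a, b⟩ hp
    simp only [hS, Finset.mem_filter, Finset.mem_univ, true_and] at hp ⊢
    exact hsym _ _ hp
  have hsum2 : ∑ p ∈ S, D p.2 = ∑ v : Fin n, D v * D v := by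
    rw [← hsum1]
    exact Finset.sum_nbij' (fun p => (p.2, p.1)) (fun p => (p.2, p.1))
      hswapS hswapS (fun p _ => rfl) (fun p _ => rfl) (fun p _ => rfl)
  have hdeg : ∀ p ∈ S, D p.1 + D p.2 ≤ n := by
    rintro ⟨u, v⟩ hp
    simp only [hS, Finset.mem_filter, Finset.mem_univ, true_and] at hp
    have hdisj : Disjoint (Finset.univ.filter (fun w => r u w))
        (Finset.univ.filter (fun w => r v w)) := by
      rw [Finset.disjoint_left]
      intro w hw1 hw2
      simp only [Finset.mem_filter, Finset.mem_univ, true_and] at hw1 hw2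
      exact htri u w v hw1 (hsym _ _ hw2) hp
    have := Finset.card_union_of_disjoint hdisj
    have hle := Finset.card_le_univ ((Finset.univ.filter (fun w => r u w)) ∪
      (Finset.univ.filter (fun w => r v w)))
    simp only [Finset.card_univ, Fintype.card_fin] at hle
    simp only [hD]
    omega
  have hdouble : 2 * ∑ v : Fin n, D v * D v ≤ S.card * n := by
    have : ∑ p ∈ S, (D p.1 + D p.2) ≤ ∑ _p ∈ S, n := Finset.sum_le_sum hdeg
    rw [Finset.sum_add_distrib, hsum1, hsum2, Finset.sum_const, smul_eq_mul] at this
    omega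
  have hCS : (∑ v : Fin n, D v) ^ 2 ≤ n * ∑ v : Fin n, D v ^ 2 := by
    have := sq_sum_le_card_mul_sum_sq (s := (Finset.univ : Finset (Fin n))) (f := D)
    simpa using this
  set m := S.card with hmdef
  rcases Nat.eq_zero_or_pos m with h0 | hpos
  · omega
  · have key : (2 * m) * m ≤ n ^ 2 * m := by
      have e1 : m ^ 2 ≤ n * ∑ v : Fin n, D v ^ 2 := by rw [hm]; exact hCS
      have e2 : ∑ v : Fin n, D v ^ 2 = ∑ v : Fin n, D v * D v := by
        refine Finset.sum_congr rfl fun v _ => sq (D v) ▸ by ring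
      calc (2 * m) * m = 2 * m ^ 2 := by ring
        _ ≤ 2 * (n * ∑ v : Fin n, D v ^ 2) := by omega
        _ = n * (2 * ∑ v : Fin n, D v * D v) := by rw [e2]; ring
        _ ≤ n * (m * n) := Nat.mul_le_mul_left n hdouble
        _ = n ^ 2 * m := by ring
    exact Nat.le_of_mul_le_mul_right key hpos


end Aux

theorem downDeg_le {n : ℕ} (hn : 0 < n) (π : Equiv.Perm (Fin n)) :
    downDeg π ≤ n ^ 2 / 4 := by
  classical
  set r : Fin n → Fin n → Prop :=
    fun a b => a ≠ b ∧ invNum (Equiv.swap a b * π) + 1 = invNum π with hr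
  have hsym : ∀ a b, r a b → r b a := by
    rintro a b ⟨h1, h2⟩
    exact ⟨h1.symm, by rwa [Equiv.swap_comm]⟩
  have htri : ∀ a b c, r a b → r b c → r a c → False := by
    rintro a b c ⟨hab, h1⟩ ⟨hbc, h2⟩ ⟨hac, h3⟩
    have h1' : invNum (Equiv.swap b a * π) + 1 = invNum π := by rwa [Equiv.swap_comm]
    have h2' : invNum (Equiv.swap c b * π) + 1 = invNum π := by rwa [Equiv.swap_comm]
    have h3' : invNum (Equiv.swap c a * π) + 1 = invNum π := by rwa [Equiv.swap_comm]
    rcases lt_or_gt_of_ne hab with o1 | o1 <;>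
      rcases lt_or_gt_of_ne hbc with o2 | o2 <;>
        rcases lt_or_gt_of_ne hac with o3 | o3
    · exact no_triangle π o1 o2 h1 h2 h3
    · exact absurd (lt_trans o1 o2) (not_lt.2 o3.le)
    · exact no_triangle π o3 o2 h3 h2' h1
    · exact no_triangle π o3 o1 h3' h1 h2'
    · exact no_triangle π o1 o3 h1' h3 h2
    · exact no_triangle π o2 o3 h2 h3' h1'
    · exact absurd o3 (not_lt.2 (lt_trans o2 o1).le)
    · exact no_triangle π o2 o1 h2' h1' h3'
  have hmantel := mantel_ordered r hsym htri
  -- relate ordered count to downDeg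
  set S := Finset.univ.filter (fun p : Fin n × Fin n => r p.1 p.2) with hS
  have hsplit : S.card = 2 * downDeg π := by
    have h1 : S.filter (fun p => p.1 < p.2) = Finset.univ.filter
        (fun p : Fin n × Fin n =>
          p.1 < p.2 ∧ invNum (Equiv.swap p.1 p.2 * π) + 1 = invNum π) := by
      ext ⟨x, y⟩
      simp only [hS, hr, Finset.mem_filter, Finset.mem_univ, true_and]
      constructor
      · rintro ⟨⟨-, hc⟩, hlt⟩; exact ⟨hlt, hc⟩
      · rintro ⟨hlt, hc⟩; exact ⟨⟨Fin.ne_of_lt hlt, hc⟩, hlt⟩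
    have h2 : (S.filter (fun p => ¬ p.1 < p.2)).card = downDeg π := by
      apply Finset.card_bij (fun p _ => (p.2, p.1))
      · rintro ⟨x, y⟩ hp
        simp only [hS, hr, Finset.mem_filter, Finset.mem_univ, true_and] at hp
        obtain ⟨⟨hne, hc⟩, hnlt⟩ := hp
        have : y < x := lt_of_le_of_ne (not_lt.1 hnlt) (Ne.symm hne)
        simp only [downDeg, Finset.mem_filter, Finset.mem_univ, true_and]
        exact ⟨this, by rwa [Equiv.swap_comm]⟩
      · rintro ⟨x, y⟩ hx ⟨u, v⟩ hu hEq
        simp only [Prod.mk.injEq] at hEq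
        exact Prod.ext hEq.2 hEq.1
      · rintro ⟨x, y⟩ hp
        simp only [downDeg, Finset.mem_filter, Finset.mem_univ, true_and] at hp
        refine ⟨(y, x), ?_, rfl⟩
        simp only [hS, hr, Finset.mem_filter, Finset.mem_univ, true_and]
        exact ⟨⟨Fin.ne_of_lt hp.1 |>.symm, by rw [Equiv.swap_comm]; exact hp.2⟩,
          not_lt.2 hp.1.le⟩
    have := Finset.card_filter_add_card_filter_not
      (s := S) (p := fun p : Fin n × Fin n => p.1 < p.2)
    rw [h1] at this
    unfold downDeg at *
    omega
  rw [hsplit] at hmantel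
  rw [Nat.le_div_iff_mul_le (by norm_num)]
  omega
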